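/- Let H = (f, φ; g, ψ) with entries in L²(𝕋) and suppose R_H is bounded and positive (i.e. ⟨R_H x, x⟩ ≥ 0 for all x ∈ L²). Then f ≥ 0 almost everywhere, ψ ≥ 0 almost everywhere, and g − φ̄ ∈ H². -/

import Mathlib

open MeasureTheory AddCircle Filter Topology
open scoped ENNReal

noncomputable section

namespace GSIO

instance : Fact (0 < 2 * Real.pi) := ⟨by positivity⟩

/-- The unit circle, realized as `ℝ / 2πℤ`. -/
abbrev 𝕋 : Type := AddCircle (2 * Real.pi)

/-- Normalized Lebesgue (Haar) measure on the circle. -/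
abbrev μ : Measure 𝕋 := @haarAddCircle (2 * Real.pi) _

/-- `L²(𝕋)`. -/
abbrev L2 : Type := Lp ℂ 2 μ

/-- The embedding `𝕋 ⊆ ℂ`, `t ↦ e^{it}`. -/
def e : C(𝕋, ℂ) := ⟨fun t => (toCircle t : ℂ), continuous_induced_dom.comp continuous_toCircle⟩

/-- The Hardy space `H²`: the closed linear span of `{zⁿ : n ≥ 0}` in `L²`. -/
def H2 : Submodule ℂ L2 :=
  (Submodule.span ℂ (Set.range fun n : ℕ => (fourierLp 2 (n : ℤ) : L2))).topologicalClosure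

instance : CompleteSpace H2 :=
  (Submodule.isClosed_topologicalClosure _).completeSpace_coe

/-- The Riesz projection `P₊ : L² → H² ⊆ L²`. -/
def Pplus : L2 →L[ℂ] L2 := (H2.subtypeL).comp (H2.orthogonalProjectionOnto)

/-- `P₋ = I - P₊`. -/
def Pminus : L2 →L[ℂ] L2 := ContinuousLinearMap.id ℂ L2 - Pplus

/-- The GSIO defining relation `R x = P₊(f·P₊x) + P₋(g·P₊x) + P₊(φ·P₋x) + P₋(ψ·P₋x)`
at a point `x ∈ L²` (including the requirement that the four products lie in `L²`). -/
def gsioEq (R : L2 → L2) (f g φ ψ : 𝕋 → ℂ) (x : L2) : Prop :=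
  ∃ (h₁ : MemLp (f * ⇑(Pplus x)) 2 μ) (h₂ : MemLp (g * ⇑(Pplus x)) 2 μ)
    (h₃ : MemLp (φ * ⇑(Pminus x)) 2 μ) (h₄ : MemLp (ψ * ⇑(Pminus x)) 2 μ),
    R x = Pplus (h₁.toLp _) + Pminus (h₂.toLp _) + Pplus (h₃.toLp _) + Pminus (h₄.toLp _)

/-- `R` is the (bounded) generalized singular integral operator with
symbol matrix `(f, φ; g, ψ)`. -/
def IsGSIO (R : L2 →L[ℂ] L2) (f g φ ψ : 𝕋 → ℂ) : Prop := ∀ x : L2, gsioEq (⇑R) f g φ ψ x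

/-- Normalized reproducing kernel `k_z` of `H²`, as an element of `L²`. -/
def kern (z : ℂ) : L2 :=
  (Real.sqrt (1 - ‖z‖ ^ 2) : ℂ) • ∑' n : ℕ, (starRingEnd ℂ z) ^ n • (fourierLp 2 (n : ℤ) : L2)

/-- The unit vector `z̄k̄_z : w ↦ w̄ ⬝ conj (k_z w)` of `(H²)^⊥`, as an element of `L²`. -/
def kbar (z : ℂ) : L2 :=
  (Real.sqrt (1 - ‖z‖ ^ 2) : ℂ) • ∑' n : ℕ, z ^ n • (fourierLp 2 (-(n + 1) : ℤ) : L2)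

/-- `L∞(𝕋)`: essentially bounded (a.e. strongly measurable) functions. -/
def Linf : Set (𝕋 → ℂ) := {h | MemLp h ∞ μ}

/-- `C(𝕋)`: functions (a.e. equal to) continuous functions. -/
def CT : Set (𝕋 → ℂ) := {h | ∃ c : 𝕋 → ℂ, Continuous c ∧ h =ᵐ[μ] c}

/-- `H∞ = H² ∩ L∞`. -/
def Hinf : Set (𝕋 → ℂ) := {h | ∃ h2 : MemLp h 2 μ, h2.toLp h ∈ H2 ∧ MemLp h ∞ μ}

/-- `H∞ + C(𝕋)`. -/
def HinfC : Set (𝕋 → ℂ) := {h | ∃ a ∈ Hinf, ∃ c ∈ CT, h =ᵐ[μ] a + c}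

/-- The quasicontinuous functions `QC = (H∞ + C) ∩ conj (H∞ + C)`. -/
def QC : Set (𝕋 → ℂ) := {h | h ∈ HinfC ∧ star h ∈ HinfC}

/-- The set of GSIOs with all four symbols in `S`. -/
def gsioSet (S : Set (𝕋 → ℂ)) : Set (L2 →L[ℂ] L2) :=
  {R | ∃ f g φ ψ : 𝕋 → ℂ, f ∈ S ∧ g ∈ S ∧ φ ∈ S ∧ ψ ∈ S ∧ IsGSIO R f g φ ψ}

/-- The C*-algebra `𝔑_S` generated by the GSIOs with symbols in `S`. -/
def NAlg (S : Set (𝕋 → ℂ)) : StarSubalgebra ℂ (L2 →L[ℂ] L2) :=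
  (StarAlgebra.adjoin ℂ (gsioSet S)).topologicalClosure

/-- Generators `R_{H₁} R_{H₂} - R_K` of the semicommutator ideal. -/
def semiGen (S : Set (𝕋 → ℂ)) : Set (L2 →L[ℂ] L2) :=
  {T | ∃ f₁ g₁ φ₁ ψ₁ f₂ g₂ φ₂ ψ₂ g φ : 𝕋 → ℂ,
      f₁ ∈ S ∧ g₁ ∈ S ∧ φ₁ ∈ S ∧ ψ₁ ∈ S ∧ f₂ ∈ S ∧ g₂ ∈ S ∧ φ₂ ∈ S ∧ ψ₂ ∈ S ∧
      g ∈ S ∧ φ ∈ S ∧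
      ∃ R₁ R₂ RK : L2 →L[ℂ] L2, IsGSIO R₁ f₁ g₁ φ₁ ψ₁ ∧ IsGSIO R₂ f₂ g₂ φ₂ ψ₂ ∧
        IsGSIO RK (f₁ * f₂) g φ (ψ₁ * ψ₂) ∧ T = R₁ * R₂ - RK}

/-- The closed two-sided ideal `𝔖𝔑_S` of `𝔑_S` generated by the semicommutators. -/
def SemiIdeal (S : Set (𝕋 → ℂ)) : Set (L2 →L[ℂ] L2) :=
  closure (AddSubgroup.closure
    {T | ∃ a b t : L2 →L[ℂ] L2, a ∈ NAlg S ∧ b ∈ NAlg S ∧ t ∈ semiGen S ∧ T = a * t * b} :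
      Set (L2 →L[ℂ] L2))

/-- Fredholm: closed range and finite-dimensional kernel and cokernel. -/
def IsFredholm (T : L2 →L[ℂ] L2) : Prop :=
  FiniteDimensional ℂ (LinearMap.ker (T : L2 →ₗ[ℂ] L2)) ∧
  FiniteDimensional ℂ (L2 ⧸ LinearMap.range (T : L2 →ₗ[ℂ] L2)) ∧
  IsClosed (LinearMap.range (T : L2 →ₗ[ℂ] L2) : Set L2)

/-- Fredholm index `ind T = dim ker T - dim ker T*`. -/
def ind (T : L2 →L[ℂ] L2) : ℤ :=
  (Module.finrank ℂ (LinearMap.ker (T : L2 →ₗ[ℂ] L2)) : ℤ) -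
    (Module.finrank ℂ (LinearMap.ker (ContinuousLinearMap.adjoint T : L2 →ₗ[ℂ] L2)) : ℤ)

/-- Essential spectrum (spectrum in the Calkin algebra, via Atkinson's theorem). -/
def essSpectrum (T : L2 →L[ℂ] L2) : Set ℂ := {z | ¬ IsFredholm (T - z • 1)}

/-- Essential norm: distance to the compact operators. -/
def essNorm (T : L2 →L[ℂ] L2) : ℝ :=
  sInf ((fun K => ‖T + K‖) '' {K : L2 →L[ℂ] L2 | IsCompactOperator K})

/-- Essential range of a measurable function. -/
def essRange (f : 𝕋 → ℂ) : Set ℂ := {c | ∀ ε > 0, μ {t | dist (f t) c < ε} ≠ 0}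

/-- `a` has winding number `w` about the origin, via a continuous argument lift. -/
def HasWindingNumber (a : C(𝕋, ℂ)) (w : ℤ) : Prop :=
  ∃ θ : ℝ → ℝ, ContinuousOn θ (Set.Icc 0 (2 * Real.pi)) ∧
    (∀ t ∈ Set.Icc 0 (2 * Real.pi),
      a (t : 𝕋) = (‖a (t : 𝕋)‖ : ℂ) * Complex.exp (θ t * Complex.I)) ∧
    θ (2 * Real.pi) - θ 0 = 2 * Real.pi * w

/-- The constant function `1` in `L²`. -/
def one2 : L2 := MemLp.toLp (fun _ => (1 : ℂ)) (memLp_const 1)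

/-- The rank-one operator `1 ⊗ 1 : x ↦ ⟨x,1⟩·1`. -/
def oneProj : L2 →L[ℂ] L2 := (innerSL ℂ one2).smulRight one2

/-- The Hilbert transform `ℍ = P₊ - P₋ - 1⊗1`. -/
def hilbertT : L2 →L[ℂ] L2 := Pplus - Pminus - oneProj

/-- `BMO(𝕋) = L∞ + ℍ L∞`, as a subset of `L²`. -/
def BMO2 : Set L2 := {x | ∃ a b : L2, ⇑a ∈ Linf ∧ ⇑b ∈ Linf ∧ x = a + hilbertT b}

/-- `⋂_{p ≥ 1} L^p(𝕋)`. -/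
def Lfin : Set (𝕋 → ℂ) := {h | ∀ p : ℝ, 1 ≤ p → MemLp h (ENNReal.ofReal p) μ}

/-- The GSIO relation for a map defined on functions (rather than on `L²`). -/
def gsioEqF (R : (𝕋 → ℂ) → (𝕋 → ℂ)) (f g φ ψ : 𝕋 → ℂ) (x : 𝕋 → ℂ) : Prop :=
  ∃ (hx : MemLp x 2 μ)
    (h₁ : MemLp (f * ⇑(Pplus (hx.toLp x))) 2 μ) (h₂ : MemLp (g * ⇑(Pplus (hx.toLp x))) 2 μ)
    (h₃ : MemLp (φ * ⇑(Pminus (hx.toLp x))) 2 μ) (h₄ : MemLp (ψ * ⇑(Pminus (hx.toLp x))) 2 μ),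
    R x =ᵐ[μ] ⇑(Pplus (h₁.toLp _) + Pminus (h₂.toLp _) + Pplus (h₃.toLp _) + Pminus (h₄.toLp _))

/-- Distance in `L∞` from a function to `H∞`. -/
def distHinfF (a : 𝕋 → ℂ) : ℝ :=
  sInf {r : ℝ | ∃ h ∈ Hinf, r = (eLpNorm (a - h) ∞ μ).toReal}

end GSIO

namespace GSIO

/-- The radial-limit function of `T` along the reproducing kernels `k_{rξ}` is `f`:
`lim_{r→1⁻} ⟨T k_{rξ}, k_{rξ}⟩ = f ξ` for a.e. `ξ` (inner products in the Mathlib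
convention, conjugate-linear in the first variable). -/
def symbPlus (T : L2 → L2) (f : 𝕋 → ℂ) : Prop :=
  ∀ᵐ ξ ∂μ, Tendsto
    (fun r : ℝ => (inner ℂ (kern ((r : ℂ) * e ξ)) (T (kern ((r : ℂ) * e ξ))) : ℂ))
    (𝓝[<] (1 : ℝ)) (𝓝 (f ξ))

/-- The radial-limit function of `T` along the vectors `z̄k̄_{rξ}` is `ψ`:
`lim_{r→1⁻} ⟨T z̄k̄_{rξ}, z̄k̄_{rξ}⟩ = ψ ξ` for a.e. `ξ`. -/
def symbMinus (T : L2 → L2) (ψ : 𝕋 → ℂ) : Prop :=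
  ∀ᵐ ξ ∂μ, Tendsto
    (fun r : ℝ => (inner ℂ (kbar ((r : ℂ) * e ξ)) (T (kbar ((r : ℂ) * e ξ))) : ℂ))
    (𝓝[<] (1 : ℝ)) (𝓝 (ψ ξ))

/-- `ρ(T) = (f, ψ)`: the pair of radial-limit symbol functions of `T`, in `L∞ ⊕ L∞`. -/
def HasSymbol (T : L2 →L[ℂ] L2) (f ψ : 𝕋 → ℂ) : Prop :=
  f ∈ Linf ∧ ψ ∈ Linf ∧ symbPlus (⇑T) f ∧ symbMinus (⇑T) ψ

end GSIO

namespace GSIO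

open scoped ComplexOrder
open Finset ComplexConjugate

local notation "⟪" x ", " y "⟫" => @inner ℂ _ _ x y

/-! ### Basic facts about the projections `P₊`, `P₋` -/

lemma Pplus_apply (x : L2) : Pplus x = (H2.orthogonalProjectionOnto x : L2) := rfl

lemma inner_Pplus_comm (x y : L2) : ⟪Pplus x, y⟫ = ⟪x, Pplus y⟫ :=
  Submodule.inner_starProjection_left_eq_right H2 x y

lemma Pplus_eq_self {x : L2} (hx : x ∈ H2) : Pplus x = x := by
  rw [Pplus_apply]; exact Submodule.starProjection_eq_self_iff.mpr hx

lemma Pplus_eq_zero {x : L2} (hx : x ∈ H2ᗮ) : Pplus x = 0 := by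
  rw [Pplus_apply, Submodule.orthogonalProjectionOnto_apply_of_mem_orthogonal hx]
  rfl

lemma Pminus_apply (x : L2) : Pminus x = x - Pplus x := rfl

lemma Pminus_mem_orth (x : L2) : Pminus x ∈ H2ᗮ := by
  rw [Pminus_apply, Pplus_apply]; exact Submodule.sub_starProjection_mem_orthogonal x

lemma Pminus_eq_zero {x : L2} (hx : x ∈ H2) : Pminus x = 0 := by
  rw [Pminus_apply, Pplus_eq_self hx, sub_self]

lemma Pminus_eq_self {x : L2} (hx : x ∈ H2ᗮ) : Pminus x = x := by
  rw [Pminus_apply, Pplus_eq_zero hx, sub_zero]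

lemma inner_plus_reduce {y : L2} (hy : y ∈ H2) (A B : L2) :
    ⟪y, Pplus A + Pminus B⟫ = ⟪y, A⟫ := by
  rw [inner_add_right]
  have h1 : ⟪y, Pplus A⟫ = ⟪y, A⟫ := by
    rw [← inner_Pplus_comm, Pplus_eq_self hy]
  have h2 : ⟪y, Pminus B⟫ = 0 :=
    Submodule.inner_right_of_mem_orthogonal hy (Pminus_mem_orth B)
  rw [h1, h2, add_zero]

lemma inner_minus_reduce {y : L2} (hy : y ∈ H2ᗮ) (A B : L2) :
    ⟪y, Pplus A + Pminus B⟫ = ⟪y, B⟫ := by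
  have h1 : ∀ C : L2, ⟪y, Pplus C⟫ = 0 := fun C => by
    rw [← inner_Pplus_comm, Pplus_eq_zero hy, inner_zero_left]
  rw [inner_add_right, Pminus_apply, inner_sub_right, h1, h1, zero_add, sub_zero]

/-! ### Membership of the exponentials -/

lemma orthonormal_fourierLp : Orthonormal ℂ (fun n : ℤ => (fourierLp 2 n : L2)) := by
  rw [← coe_fourierBasis]
  exact (fourierBasis (T := 2 * Real.pi)).orthonormal

lemma fourierLp_mem_H2 {n : ℤ} (hn : 0 ≤ n) : (fourierLp 2 n : L2) ∈ H2 := by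
  apply Submodule.le_topologicalClosure
  apply Submodule.subset_span
  exact ⟨n.toNat, by simpa using congrArg (fourierLp (T := 2 * Real.pi) 2) (Int.toNat_of_nonneg hn)⟩

lemma fourierLp_mem_orth {n : ℤ} (hn : n < 0) : (fourierLp 2 n : L2) ∈ H2ᗮ := by
  have hle : H2 ≤ (ℂ ∙ (fourierLp 2 n : L2))ᗮ := by
    apply Submodule.topologicalClosure_minimal
    · rw [Submodule.span_le]
      rintro - ⟨m, rfl⟩
      rw [SetLike.mem_coe, Submodule.mem_orthogonal_singleton_iff_inner_right]
      rw [orthonormal_iff_ite.mp orthonormal_fourierLp n (m : ℤ)]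
      simp only [ite_eq_right_iff]
      intro h
      omega
    · exact Submodule.isClosed_orthogonal _
  rw [Submodule.mem_orthogonal]
  intro u hu
  rw [inner_eq_zero_symm]
  exact Submodule.inner_right_of_mem_orthogonal (Submodule.mem_span_singleton_self _) (hle hu)

/-! ### Pointwise description of finite Fourier sums -/

lemma norm_fourier (m : ℤ) (t : 𝕋) : ‖fourier m t‖ = 1 := by
  rw [fourier_apply]
  exact Circle.norm_coe _

lemma coeFn_fourierSum {ι : Type*} (s : Finset ι) (n : ι → ℤ) (a : ι → ℂ) :
    (((∑ j ∈ s, a j • (fourierLp 2 (n j) : L2)) : L2) : 𝕋 → ℂ)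
      =ᵐ[μ] fun t => ∑ j ∈ s, a j * fourier (n j) t := by
  classical
  induction s using Finset.induction_on with
  | empty =>
    simp only [Finset.sum_empty]
    exact MeasureTheory.Lp.coeFn_zero ℂ 2 μ
  | @insert j s hj ih =>
    rw [Finset.sum_insert hj]
    filter_upwards [MeasureTheory.Lp.coeFn_add (a j • (fourierLp 2 (n j) : L2))
        (∑ i ∈ s, a i • (fourierLp 2 (n i) : L2)),
      MeasureTheory.Lp.coeFn_smul (a j) (fourierLp 2 (n j) : L2),
      coeFn_fourierLp 2 (n j), ih] with t h1 h2 h3 h4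
    rw [h1, Finset.sum_insert hj]
    simp only [Pi.add_apply, Pi.smul_apply, smul_eq_mul] at h2 ⊢
    rw [h2, h3, h4]

/-! ### Integrals against exponentials -/

lemma integrable_mul_fourier {w : 𝕋 → ℂ} (hw : MeasureTheory.MemLp w 2 μ) (m : ℤ) :
    MeasureTheory.Integrable (fun t => w t * fourier m t) μ := by
  have h := (hw.integrable one_le_two).bdd_mul
      ((map_continuous (fourier m)).aestronglyMeasurable)
      (c := 1) (ae_of_all _ fun t => le_of_eq (norm_fourier m t))
  simpa [mul_comm] using h

lemma integral_mul_fourier_eq (w : 𝕋 → ℂ) (m : ℤ) :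
    ∫ t, w t * fourier m t ∂μ = fourierCoeff w (-m) := by
  rw [fourierCoeff]
  congr 1
  funext t
  rw [neg_neg, smul_eq_mul, mul_comm]

lemma fourierCoeff_congr_ae {u v : 𝕋 → ℂ} (h : u =ᵐ[μ] v) (m : ℤ) :
    fourierCoeff u m = fourierCoeff v m := by
  rw [fourierCoeff, fourierCoeff]
  apply MeasureTheory.integral_congr_ae
  filter_upwards [h] with t ht
  rw [ht]

lemma fourierCoeff_sub {u v : 𝕋 → ℂ} (hu : MeasureTheory.MemLp u 2 μ)
    (hv : MeasureTheory.MemLp v 2 μ) (m : ℤ) :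
    fourierCoeff (u - v) m = fourierCoeff u m - fourierCoeff v m := by
  have hu' : MeasureTheory.Integrable (fun t => fourier (-m) t • u t) μ := by
    have := integrable_mul_fourier hu (-m)
    simpa [mul_comm, smul_eq_mul] using this
  have hv' : MeasureTheory.Integrable (fun t => fourier (-m) t • v t) μ := by
    have := integrable_mul_fourier hv (-m)
    simpa [mul_comm, smul_eq_mul] using this
  rw [fourierCoeff, fourierCoeff, fourierCoeff, ← MeasureTheory.integral_sub hu' hv']
  congr 1
  funext t
  simp [smul_eq_mul, Pi.sub_apply, mul_sub]

lemma memℒp_star {v : 𝕋 → ℂ} (h : MeasureTheory.MemLp v 2 μ) :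
    MeasureTheory.MemLp (star v) 2 μ := by
  refine ⟨?_, ?_⟩
  · exact continuous_star.comp_aestronglyMeasurable h.1
  · have he : MeasureTheory.eLpNorm (star v) 2 μ = MeasureTheory.eLpNorm v 2 μ :=
      MeasureTheory.eLpNorm_congr_norm_ae (MeasureTheory.ae_of_all _ fun t => by
        simp [Pi.star_apply, norm_star])
    rw [he]; exact h.2

lemma fourierCoeff_star (v : 𝕋 → ℂ) (m : ℤ) :
    fourierCoeff (star v) m = conj (fourierCoeff v (-m)) := by
  rw [fourierCoeff, fourierCoeff, ← integral_conj]
  congr 1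
  funext t
  simp only [smul_eq_mul, map_mul, neg_neg, Pi.star_apply, ← fourier_neg, Complex.star_def]

/-! ### Expansion of inner products against finite Fourier sums -/

lemma inner_fourierSum_toLp {ι : Type*} (w : 𝕋 → ℂ) (hw : MemLp w 2 μ)
    (s s' : Finset ι) (n n' : ι → ℤ) (a b : ι → ℂ)
    (hp : MemLp (w * ⇑(∑ j ∈ s, a j • (fourierLp 2 (n j) : L2))) 2 μ) :
    ⟪(∑ j ∈ s', b j • (fourierLp 2 (n' j) : L2)), hp.toLp _⟫
      = ∑ j ∈ s', ∑ k ∈ s, conj (b j) * a k * fourierCoeff w (n' j - n k) := by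
  rw [MeasureTheory.L2.inner_def]
  have hstep : ∫ t, ⟪(⇑(∑ j ∈ s', b j • (fourierLp 2 (n' j) : L2)) : 𝕋 → ℂ) t,
        (⇑(hp.toLp _) : 𝕋 → ℂ) t⟫ ∂μ
      = ∫ t, ∑ j ∈ s', ∑ k ∈ s,
          conj (b j) * a k * (w t * fourier (n k - n' j) t) ∂μ := by
    apply integral_congr_ae
    filter_upwards [coeFn_fourierSum s' n' b, coeFn_fourierSum s n a,
      hp.coeFn_toLp] with t h1 h2 h3
    rw [h1, h3, RCLike.inner_apply, mul_comm, Pi.mul_apply, h2, map_sum, Finset.sum_mul]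
    refine Finset.sum_congr rfl fun j _ => ?_
    rw [Finset.mul_sum, Finset.mul_sum]
    refine Finset.sum_congr rfl fun k _ => ?_
    rw [map_mul, sub_eq_add_neg, fourier_add, fourier_neg]
    ring
  rw [hstep, integral_finset_sum _ fun j _ =>
    MeasureTheory.integrable_finset_sum _ fun k _ =>
      ((integrable_mul_fourier hw _).const_mul _)]
  refine Finset.sum_congr rfl fun j _ => ?_
  rw [integral_finset_sum _ fun k _ => ((integrable_mul_fourier hw _).const_mul _)]
  refine Finset.sum_congr rfl fun k _ => ?_
  rw [integral_const_mul, integral_mul_fourier_eq, neg_sub]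

/-! ### Structure of `R` on `H²` and its orthogonal complement -/

lemma gsio_plus {R : L2 →L[ℂ] L2} {f g φ ψ : 𝕋 → ℂ} (hR : IsGSIO R f g φ ψ)
    {x : L2} (hx : x ∈ H2) :
    ∃ (ha : MemLp (f * ⇑x) 2 μ) (hb : MemLp (g * ⇑x) 2 μ),
      R x = Pplus (ha.toLp _) + Pminus (hb.toLp _) := by
  obtain ⟨h₁, h₂, h₃, h₄, hEq⟩ := hR x
  have hPp : Pplus x = x := Pplus_eq_self hx
  have hPm : Pminus x = 0 := Pminus_eq_zero hx
  have ha : MemLp (f * ⇑x) 2 μ := by rw [← hPp]; exact h₁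
  have hb : MemLp (g * ⇑x) 2 μ := by rw [← hPp]; exact h₂
  have hzero : ∀ (v : 𝕋 → ℂ) (hv : MemLp (v * ⇑(Pminus x)) 2 μ), hv.toLp _ = 0 := by
    intro v hv
    have hz : v * ⇑(Pminus x) =ᵐ[μ] 0 := by
      rw [hPm]
      filter_upwards [MeasureTheory.Lp.coeFn_zero ℂ 2 μ] with t ht
      simp [Pi.mul_apply, ht]
    rw [MemLp.toLp_congr hv (MeasureTheory.MemLp.zero) hz, MemLp.toLp_zero]
  refine ⟨ha, hb, ?_⟩
  rw [hEq, hzero φ h₃, hzero ψ h₄, map_zero, map_zero, add_zero, add_zero]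
  have e1 : h₁.toLp _ = ha.toLp _ := MemLp.toLp_congr h₁ ha (by rw [hPp])
  have e2 : h₂.toLp _ = hb.toLp _ := MemLp.toLp_congr h₂ hb (by rw [hPp])
  rw [e1, e2]

lemma gsio_minus {R : L2 →L[ℂ] L2} {f g φ ψ : 𝕋 → ℂ} (hR : IsGSIO R f g φ ψ)
    {x : L2} (hx : x ∈ H2ᗮ) :
    ∃ (hc : MemLp (φ * ⇑x) 2 μ) (hd : MemLp (ψ * ⇑x) 2 μ),
      R x = Pplus (hc.toLp _) + Pminus (hd.toLp _) := by
  obtain ⟨h₁, h₂, h₃, h₄, hEq⟩ := hR x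
  have hPp : Pplus x = 0 := Pplus_eq_zero hx
  have hPm : Pminus x = x := Pminus_eq_self hx
  have hc : MemLp (φ * ⇑x) 2 μ := by rw [← hPm]; exact h₃
  have hd : MemLp (ψ * ⇑x) 2 μ := by rw [← hPm]; exact h₄
  have hzero : ∀ (v : 𝕋 → ℂ) (hv : MemLp (v * ⇑(Pplus x)) 2 μ), hv.toLp _ = 0 := by
    intro v hv
    have hz : v * ⇑(Pplus x) =ᵐ[μ] 0 := by
      rw [hPp]
      filter_upwards [MeasureTheory.Lp.coeFn_zero ℂ 2 μ] with t ht
      simp [Pi.mul_apply, ht]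
    rw [MemLp.toLp_congr hv (MeasureTheory.MemLp.zero) hz, MemLp.toLp_zero]
  refine ⟨hc, hd, ?_⟩
  rw [hEq, hzero f h₁, hzero g h₂, map_zero, map_zero, zero_add, zero_add]
  have e1 : h₃.toLp _ = hc.toLp _ := MemLp.toLp_congr h₃ hc (by rw [hPm])
  have e2 : h₄.toLp _ = hd.toLp _ := MemLp.toLp_congr h₄ hd (by rw [hPm])
  rw [e1, e2]

lemma inner_R_pp {R : L2 →L[ℂ] L2} {f g φ ψ : 𝕋 → ℂ} (hR : IsGSIO R f g φ ψ)
    {x y : L2} (hx : x ∈ H2) (hy : y ∈ H2) :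
    ∃ ha : MemLp (f * ⇑x) 2 μ, ⟪y, R x⟫ = ⟪y, ha.toLp _⟫ := by
  obtain ⟨ha, hb, hEq⟩ := gsio_plus hR hx
  exact ⟨ha, by rw [hEq, inner_plus_reduce hy]⟩

lemma inner_R_pm {R : L2 →L[ℂ] L2} {f g φ ψ : 𝕋 → ℂ} (hR : IsGSIO R f g φ ψ)
    {x y : L2} (hx : x ∈ H2) (hy : y ∈ H2ᗮ) :
    ∃ hb : MemLp (g * ⇑x) 2 μ, ⟪y, R x⟫ = ⟪y, hb.toLp _⟫ := by
  obtain ⟨ha, hb, hEq⟩ := gsio_plus hR hx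
  exact ⟨hb, by rw [hEq, inner_minus_reduce hy]⟩

lemma inner_R_mp {R : L2 →L[ℂ] L2} {f g φ ψ : 𝕋 → ℂ} (hR : IsGSIO R f g φ ψ)
    {x y : L2} (hx : x ∈ H2ᗮ) (hy : y ∈ H2) :
    ∃ hc : MemLp (φ * ⇑x) 2 μ, ⟪y, R x⟫ = ⟪y, hc.toLp _⟫ := by
  obtain ⟨hc, hd, hEq⟩ := gsio_minus hR hx
  exact ⟨hc, by rw [hEq, inner_plus_reduce hy]⟩

lemma inner_R_mm {R : L2 →L[ℂ] L2} {f g φ ψ : 𝕋 → ℂ} (hR : IsGSIO R f g φ ψ)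
    {x y : L2} (hx : x ∈ H2ᗮ) (hy : y ∈ H2ᗮ) :
    ∃ hd : MemLp (ψ * ⇑x) 2 μ, ⟪y, R x⟫ = ⟪y, hd.toLp _⟫ := by
  obtain ⟨hc, hd, hEq⟩ := gsio_minus hR hx
  exact ⟨hd, by rw [hEq, inner_minus_reduce hy]⟩

/-! ### A combinatorial identity for Fejér sums -/

lemma comb_aux (F : ℤ → ℂ) (N : ℕ) :
    ∑ k ∈ Finset.range N, F ((N : ℤ) - k) + ∑ j ∈ Finset.range (N + 1), F ((j : ℤ) - N)
      = ∑ m ∈ Finset.Icc (-(N : ℤ)) N, F m := by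
  have hsplit : Finset.Icc (-(N : ℤ)) N = Finset.Icc (-(N : ℤ)) 0 ∪ Finset.Ioc (0 : ℤ) N := by
    ext m
    simp only [Finset.mem_Icc, Finset.mem_union, Finset.mem_Ioc]
    omega
  have hdisj : Disjoint (Finset.Icc (-(N : ℤ)) 0) (Finset.Ioc (0 : ℤ) N) := by
    rw [Finset.disjoint_left]
    intro m hm hm'
    simp only [Finset.mem_Icc] at hm
    simp only [Finset.mem_Ioc] at hm'
    omega
  rw [hsplit, Finset.sum_union hdisj]
  have h1 : ∑ k ∈ Finset.range N, F ((N : ℤ) - k) = ∑ m ∈ Finset.Ioc (0 : ℤ) N, F m := by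
    refine Finset.sum_bij' (fun k _ => (N : ℤ) - k) (fun m _ => (N - m).toNat) ?_ ?_ ?_ ?_ ?_
    · intro k hk
      simp only [Finset.mem_range] at hk
      simp only [Finset.mem_Ioc]
      omega
    · intro m hm
      simp only [Finset.mem_Ioc] at hm
      simp only [Finset.mem_range]
      omega
    · intro k hk
      simp only [Finset.mem_range] at hk
      omega
    · intro m hm
      simp only [Finset.mem_Ioc] at hm
      omega
    · intro k _
      rfl
  have h2 : ∑ j ∈ Finset.range (N + 1), F ((j : ℤ) - N)
      = ∑ m ∈ Finset.Icc (-(N : ℤ)) 0, F m := by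
    refine Finset.sum_bij' (fun j _ => (j : ℤ) - N) (fun m _ => (N + m).toNat) ?_ ?_ ?_ ?_ ?_
    · intro j hj
      simp only [Finset.mem_range] at hj
      simp only [Finset.mem_Icc]
      omega
    · intro m hm
      simp only [Finset.mem_Icc] at hm
      simp only [Finset.mem_range]
      omega
    · intro j hj
      simp only [Finset.mem_range] at hj
      omega
    · intro m hm
      simp only [Finset.mem_Icc] at hm
      omega
    · intro j _
      rfl
  rw [h1, h2, add_comm]

lemma comb (F : ℤ → ℂ) (N : ℕ) :
    ∑ j ∈ Finset.range N, ∑ k ∈ Finset.range N, F ((j : ℤ) - k)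
      = ∑ k ∈ Finset.range N, ∑ m ∈ Finset.Icc (-(k : ℤ)) k, F m := by
  induction N with
  | zero => simp
  | succ N ih =>
    rw [Finset.sum_range_succ (fun k => ∑ m ∈ Finset.Icc (-(k : ℤ)) k, F m), ← ih]
    rw [Finset.sum_range_succ]
    have hinner : ∀ j ∈ Finset.range N,
        ∑ k ∈ Finset.range (N + 1), F ((j : ℤ) - k)
          = ∑ k ∈ Finset.range N, F ((j : ℤ) - k) + F ((j : ℤ) - N) := fun j _ =>
      Finset.sum_range_succ _ _
    rw [Finset.sum_congr rfl hinner, Finset.sum_add_distrib]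
    have hlast : ∑ k ∈ Finset.range (N + 1), F ((N : ℤ) - k)
        = ∑ k ∈ Finset.range N, F ((N : ℤ) - k) + F ((N : ℤ) - N) :=
      Finset.sum_range_succ _ _
    rw [hlast]
    have := comb_aux F N
    rw [Finset.sum_range_succ (fun j => F ((j : ℤ) - N))] at this
    -- push_cast not needed
    linear_combination this

/-! ### Order-theoretic helpers in `ℂ` -/

lemma isClosed_nonnegs : IsClosed {z : ℂ | 0 ≤ z} := by
  have hset : {z : ℂ | 0 ≤ z} = Complex.re ⁻¹' Set.Ici 0 ∩ Complex.im ⁻¹' {0} := by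
    ext z
    simp only [Set.mem_setOf_eq, Complex.le_def, Complex.zero_re, Complex.zero_im,
      Set.mem_inter_iff, Set.mem_preimage, Set.mem_Ici, Set.mem_singleton_iff]
    exact ⟨fun h => ⟨h.1, h.2.symm⟩, fun h => ⟨h.1, h.2.symm⟩⟩
  rw [hset]
  exact (isClosed_Ici.preimage Complex.continuous_re).inter
    (isClosed_singleton.preimage Complex.continuous_im)

lemma real_smul_nonneg {r : ℝ} (hr : 0 ≤ r) {z : ℂ} (hz : 0 ≤ z) : 0 ≤ r • z := by
  rw [Complex.le_def] at hz ⊢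
  rw [Complex.real_smul]
  constructor
  · simp only [Complex.zero_re, Complex.mul_re, Complex.ofReal_re, Complex.ofReal_im,
      zero_mul, sub_zero]
    exact mul_nonneg hr (by simpa using hz.1)
  · simp only [Complex.zero_im, Complex.mul_im, Complex.ofReal_re, Complex.ofReal_im,
      zero_mul, add_zero, ← hz.2]
    ring

lemma conj_nonneg {z : ℂ} (hz : 0 ≤ z) : 0 ≤ conj z := by
  rw [Complex.le_def] at hz ⊢
  simp only [Complex.zero_re, Complex.zero_im, Complex.conj_re, Complex.conj_im] at hz ⊢
  exact ⟨hz.1, by rw [← hz.2, neg_zero]⟩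

/-! ### The Fejér-type positivity criterion -/

lemma coeFn_L2_sum {ι : Type*} (s : Finset ι) (v : ι → L2) (gfun : ι → 𝕋 → ℂ)
    (h : ∀ i ∈ s, (⇑(v i) : 𝕋 → ℂ) =ᵐ[μ] gfun i) :
    (⇑(∑ i ∈ s, v i) : 𝕋 → ℂ) =ᵐ[μ] fun t => ∑ i ∈ s, gfun i t := by
  classical
  induction s using Finset.induction_on with
  | empty =>
    simp only [Finset.sum_empty]
    exact MeasureTheory.Lp.coeFn_zero ℂ 2 μ
  | @insert k s hk ih =>
    rw [Finset.sum_insert hk]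
    filter_upwards [MeasureTheory.Lp.coeFn_add (v k) (∑ i ∈ s, v i),
      ih fun i hi => h i (Finset.mem_insert_of_mem hi),
      h k (Finset.mem_insert_self k s)] with t h1 h2 h3
    rw [h1, Finset.sum_insert hk]
    simp only [Pi.add_apply]
    rw [h2, h3]

lemma ae_nonneg_of_fejer (w : 𝕋 → ℂ) (hw : MemLp w 2 μ)
    (H : ∀ (N : ℕ) (t : 𝕋), 0 ≤ ∑ j ∈ Finset.range N, ∑ k ∈ Finset.range N,
        fourier ((j : ℤ) - k) t * fourierCoeff w ((j : ℤ) - k)) :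
    ∀ᵐ t ∂μ, 0 ≤ w t := by
  classical
  set W : L2 := hw.toLp w with hW
  have hcoeff : ∀ m : ℤ, fourierCoeff (⇑W) m = fourierCoeff w m := fun m =>
    fourierCoeff_congr_ae hw.coeFn_toLp m
  -- partial sums converge in `L²`
  set S : ℕ → L2 := fun k => ∑ m ∈ Finset.Icc (-(k : ℤ)) k, fourierCoeff w m • fourierLp 2 m
    with hSdef
  have hIcc : Filter.Tendsto (fun N : ℕ => Finset.Icc (-(N : ℤ)) N) atTop atTop := by
    apply tendsto_atTop_finset_of_monotone
    · intro p q hpq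
      exact Finset.Icc_subset_Icc (by omega) (by omega)
    · intro m
      exact ⟨m.natAbs, by simp only [Finset.mem_Icc]; omega⟩
  have hhs : HasSum (fun i : ℤ => fourierCoeff w i • (fourierLp 2 i : L2)) W := by
    have := hasSum_fourier_series_L2 W
    simpa only [hcoeff] using this
  have hS : Filter.Tendsto S atTop (nhds W) := hhs.comp hIcc
  set G : ℕ → L2 := fun N => (N : ℝ)⁻¹ • ∑ k ∈ Finset.range N, S k with hGdef
  have hG : Filter.Tendsto G atTop (nhds W) := hS.cesaro_smul
  -- pointwise description of `G N`
  have hcoe : ∀ N : ℕ, (⇑(G N) : 𝕋 → ℂ) =ᵐ[μ]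
      fun t => (N : ℝ)⁻¹ • ∑ k ∈ Finset.range N,
        ∑ m ∈ Finset.Icc (-(k : ℤ)) k, fourierCoeff w m * fourier m t := by
    intro N
    have hsum : (⇑(∑ k ∈ Finset.range N, S k) : 𝕋 → ℂ) =ᵐ[μ]
        fun t => ∑ k ∈ Finset.range N,
          ∑ m ∈ Finset.Icc (-(k : ℤ)) k, fourierCoeff w m * fourier m t := by
      apply coeFn_L2_sum
      intro k _
      have h3 := coeFn_fourierSum (Finset.Icc (-(k : ℤ)) k) id (fourierCoeff w)
      simpa only [hSdef, id_eq] using h3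
    filter_upwards [MeasureTheory.Lp.coeFn_smul ((N : ℝ)⁻¹) (∑ k ∈ Finset.range N, S k),
      hsum] with t h1 h2
    rw [h1]
    simp only [Pi.smul_apply]
    rw [h2]
  -- pointwise positivity of the Fejér means
  have hpos : ∀ (N : ℕ) (t : 𝕋), 0 ≤ (N : ℝ)⁻¹ • ∑ k ∈ Finset.range N,
      ∑ m ∈ Finset.Icc (-(k : ℤ)) k, fourierCoeff w m * fourier m t := by
    intro N t
    apply real_smul_nonneg (by positivity)
    have hc := comb (fun m => fourier m t * fourierCoeff w m) N
    have := H N t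
    rw [hc] at this
    have hre : ∀ k : ℕ, ∑ m ∈ Finset.Icc (-(k : ℤ)) k, fourierCoeff w m * fourier m t
        = ∑ m ∈ Finset.Icc (-(k : ℤ)) k, fourier m t * fourierCoeff w m := fun k =>
      Finset.sum_congr rfl fun m _ => mul_comm _ _
    simpa only [hre] using this
  -- convergence in measure, then a.e. along a subsequence
  have htm : MeasureTheory.TendstoInMeasure μ (fun N => ⇑(G N)) atTop ⇑W :=
    MeasureTheory.tendstoInMeasure_of_tendsto_Lp hG
  obtain ⟨ns, -, hae⟩ := htm.exists_seq_tendsto_ae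
  have hWcoe := hw.coeFn_toLp
  have hall : ∀ᵐ t ∂μ, ∀ N : ℕ, (⇑(G N) : 𝕋 → ℂ) t = (N : ℝ)⁻¹ • ∑ k ∈ Finset.range N,
      ∑ m ∈ Finset.Icc (-(k : ℤ)) k, fourierCoeff w m * fourier m t :=
    MeasureTheory.ae_all_iff.mpr fun N => hcoe N
  filter_upwards [hae, hall, hWcoe] with t h1 h2 h3
  rw [← h3]
  apply isClosed_nonnegs.mem_of_tendsto h1
  filter_upwards with i
  rw [h2 (ns i)]
  exact hpos (ns i) t

/-! ### The coefficient criterion for membership in `H²` -/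

lemma mem_H2_of_coeff {x : L2} (h : ∀ n : ℤ, n < 0 → fourierCoeff (⇑x) n = 0) : x ∈ H2 := by
  have hs := (fourierBasis (T := 2 * Real.pi)).hasSum_repr x
  rw [coe_fourierBasis] at hs
  have hmem : ∀ s : Finset ℤ,
      ∑ i ∈ s, (fourierBasis.repr x) i • (fourierLp 2 i : L2) ∈ H2 := by
    intro s
    apply Submodule.sum_mem
    intro i _
    rcases lt_or_ge i 0 with hi | hi
    · have : (fourierBasis.repr x) i = 0 := by
        rw [fourierBasis_repr]
        exact h i hi
      rw [this, zero_smul]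
      exact Submodule.zero_mem _
    · exact Submodule.smul_mem _ _ (fourierLp_mem_H2 hi)
  exact (Submodule.isClosed_topologicalClosure _).mem_of_tendsto hs
    (Filter.Eventually.of_forall fun s => hmem s)

/-! ### An algebraic positivity lemma -/

lemma conj_of_quadratic_nonneg {α β γ δ : ℂ}
    (h0 : 0 ≤ α)
    (h1 : 0 ≤ α + 1 * β + conj 1 * γ + conj 1 * 1 * δ)
    (h2 : 0 ≤ α + (-1) * β + conj (-1) * γ + conj (-1) * (-1) * δ)
    (h3 : 0 ≤ α + Complex.I * β + conj Complex.I * γ + conj Complex.I * Complex.I * δ) :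
    β = conj γ := by
  simp only [map_one, one_mul, mul_one, map_neg, neg_mul, neg_neg, Complex.conj_I,
    Complex.I_mul_I, neg_mul, mul_neg] at h1 h2 h3
  rw [Complex.le_def] at h0 h1 h2 h3
  obtain ⟨-, h0i⟩ := h0
  obtain ⟨-, h1i⟩ := h1
  obtain ⟨-, h2i⟩ := h2
  obtain ⟨-, h3i⟩ := h3
  simp only [Complex.zero_im, Complex.add_im, Complex.neg_im, Complex.mul_im,
    Complex.I_re, Complex.I_im, Complex.neg_re, Complex.sub_im] at h0i h1i h2i h3i
  apply Complex.ext
  · have := h3i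
    simp only [Complex.conj_re]
    linarith
  · simp only [Complex.conj_im]
    linarith

lemma inner_quadratic_expand (R : L2 →L[ℂ] L2) (u v : L2) (lam : ℂ) :
    ⟪u + lam • v, R (u + lam • v)⟫
      = ⟪u, R u⟫ + lam * ⟪u, R v⟫ + conj lam * ⟪v, R u⟫ + conj lam * lam * ⟪v, R v⟫ := by
  simp only [map_add, ContinuousLinearMap.map_smul, inner_add_left, inner_add_right,
    inner_smul_left, inner_smul_right]
  ring

/-! ### Single-exponential inner product computation -/

lemma inner_fourier_toLp (w : 𝕋 → ℂ) (hw : MemLp w 2 μ) (p q : ℤ)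
    (hp2 : MemLp (w * ⇑(fourierLp 2 q : L2)) 2 μ) :
    ⟪(fourierLp 2 p : L2), hp2.toLp _⟫ = fourierCoeff w (p - q) := by
  rw [MeasureTheory.L2.inner_def]
  have hstep : ∫ t, ⟪(⇑(fourierLp 2 p : L2) : 𝕋 → ℂ) t, (⇑(hp2.toLp _) : 𝕋 → ℂ) t⟫ ∂μ
      = ∫ t, w t * fourier (q - p) t ∂μ := by
    apply integral_congr_ae
    filter_upwards [coeFn_fourierLp (T := 2 * Real.pi) 2 p,
      coeFn_fourierLp (T := 2 * Real.pi) 2 q, hp2.coeFn_toLp] with t h1 h2 h3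
    rw [h1, h3, RCLike.inner_apply, Pi.mul_apply, h2, sub_eq_add_neg, fourier_add, fourier_neg]
    ring
  rw [hstep, integral_mul_fourier_eq, neg_sub]

/-! ### Positivity of Toeplitz-type quadratic forms -/

lemma pos_expand_pp {R : L2 →L[ℂ] L2} {f g φ ψ : 𝕋 → ℂ} (hR : IsGSIO R f g φ ψ)
    (hf : MemLp f 2 μ) (hpos : ∀ x : L2, 0 ≤ (inner ℂ (R x) x : ℂ))
    {ι : Type*} (s : Finset ι) (n : ι → ℤ) (hn : ∀ j ∈ s, 0 ≤ n j) (a : ι → ℂ) :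
    0 ≤ ∑ j ∈ s, ∑ k ∈ s, conj (a j) * a k * fourierCoeff f (n j - n k) := by
  have hxm : (∑ j ∈ s, a j • (fourierLp 2 (n j) : L2)) ∈ H2 :=
    Submodule.sum_mem _ fun j hj => Submodule.smul_mem _ _ (fourierLp_mem_H2 (hn j hj))
  obtain ⟨ha, hEq⟩ := inner_R_pp hR hxm hxm
  have hq : 0 ≤ ⟪(∑ j ∈ s, a j • (fourierLp 2 (n j) : L2)),
      R (∑ j ∈ s, a j • (fourierLp 2 (n j) : L2))⟫ := by
    have h := conj_nonneg (hpos (∑ j ∈ s, a j • (fourierLp 2 (n j) : L2)))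
    rwa [inner_conj_symm] at h
  rwa [hEq, inner_fourierSum_toLp f hf s s n n a a ha] at hq

lemma pos_expand_mm {R : L2 →L[ℂ] L2} {f g φ ψ : 𝕋 → ℂ} (hR : IsGSIO R f g φ ψ)
    (hψ : MemLp ψ 2 μ) (hpos : ∀ x : L2, 0 ≤ (inner ℂ (R x) x : ℂ))
    {ι : Type*} (s : Finset ι) (n : ι → ℤ) (hn : ∀ j ∈ s, n j < 0) (a : ι → ℂ) :
    0 ≤ ∑ j ∈ s, ∑ k ∈ s, conj (a j) * a k * fourierCoeff ψ (n j - n k) := by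
  have hxm : (∑ j ∈ s, a j • (fourierLp 2 (n j) : L2)) ∈ H2ᗮ :=
    Submodule.sum_mem _ fun j hj => Submodule.smul_mem _ _ (fourierLp_mem_orth (hn j hj))
  obtain ⟨hd, hEq⟩ := inner_R_mm hR hxm hxm
  have hq : 0 ≤ ⟪(∑ j ∈ s, a j • (fourierLp 2 (n j) : L2)),
      R (∑ j ∈ s, a j • (fourierLp 2 (n j) : L2))⟫ := by
    have h := conj_nonneg (hpos (∑ j ∈ s, a j • (fourierLp 2 (n j) : L2)))
    rwa [inner_conj_symm] at h
  rwa [hEq, inner_fourierSum_toLp ψ hψ s s n n a a hd] at hq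

/-- If `R_H` is bounded and positive (`⟨R_H x, x⟩ ≥ 0` for all `x`),
then `f ≥ 0` a.e., `ψ ≥ 0` a.e., and `g - φ̄ ∈ H²`. -/
theorem gsio_positive (f g φ ψ : 𝕋 → ℂ)
    (hf : MemLp f 2 μ) (hg : MemLp g 2 μ) (hφ : MemLp φ 2 μ) (hψ : MemLp ψ 2 μ)
    (R : L2 →L[ℂ] L2) (hR : IsGSIO R f g φ ψ)
    (hpos : ∀ x : L2, 0 ≤ (inner ℂ (R x) x : ℂ)) :
    (∀ᵐ t ∂μ, 0 ≤ f t) ∧ (∀ᵐ t ∂μ, 0 ≤ ψ t) ∧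
      ∃ hc : MemLp (g - star φ) 2 μ, hc.toLp (g - star φ) ∈ H2 := by
  refine ⟨?_, ?_, ?_⟩
  · -- `f ≥ 0` a.e.
    apply ae_nonneg_of_fejer f hf
    intro N t
    have h2 := pos_expand_pp hR hf hpos (Finset.range N) (fun j => (j : ℤ))
      (fun j _ => Int.ofNat_nonneg j) (fun j => fourier (-(j : ℤ)) t)
    have hterm : ∀ j k : ℕ,
        conj (fourier (-(j : ℤ)) t) * fourier (-(k : ℤ)) t * fourierCoeff f ((j : ℤ) - k)
          = fourier ((j : ℤ) - k) t * fourierCoeff f ((j : ℤ) - k) := by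
      intro j k
      rw [← fourier_neg, neg_neg, show ((j : ℤ) - k) = (j : ℤ) + -(k : ℤ) from by ring,
        ← fourier_add]
    have heq : ∑ j ∈ Finset.range N, ∑ k ∈ Finset.range N,
          conj (fourier (-(j : ℤ)) t) * fourier (-(k : ℤ)) t * fourierCoeff f ((j : ℤ) - k)
        = ∑ j ∈ Finset.range N, ∑ k ∈ Finset.range N,
          fourier ((j : ℤ) - k) t * fourierCoeff f ((j : ℤ) - k) :=
      Finset.sum_congr rfl fun j _ => Finset.sum_congr rfl fun k _ => hterm j k
    rwa [heq] at h2
  · -- `ψ ≥ 0` a.e.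
    apply ae_nonneg_of_fejer ψ hψ
    intro N t
    have h2 := pos_expand_mm hR hψ hpos (Finset.range N) (fun j => -(j : ℤ) - 1)
      (fun j _ => by omega) (fun j => fourier ((j : ℤ)) t)
    have hterm : ∀ j k : ℕ,
        conj (fourier ((j : ℤ)) t) * fourier ((k : ℤ)) t
            * fourierCoeff ψ ((-(j : ℤ) - 1) - (-(k : ℤ) - 1))
          = fourier ((k : ℤ) - j) t * fourierCoeff ψ ((k : ℤ) - j) := by
      intro j k
      rw [show ((-(j : ℤ) - 1) - (-(k : ℤ) - 1)) = (k : ℤ) - j from by ring,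
        show ((k : ℤ) - j) = -(j : ℤ) + (k : ℤ) from by ring, ← fourier_neg, ← fourier_add]
    have heq : ∑ j ∈ Finset.range N, ∑ k ∈ Finset.range N,
          conj (fourier ((j : ℤ)) t) * fourier ((k : ℤ)) t
            * fourierCoeff ψ ((-(j : ℤ) - 1) - (-(k : ℤ) - 1))
        = ∑ k ∈ Finset.range N, ∑ j ∈ Finset.range N,
          fourier ((k : ℤ) - j) t * fourierCoeff ψ ((k : ℤ) - j) := by
      rw [Finset.sum_comm]
      exact Finset.sum_congr rfl fun k _ => Finset.sum_congr rfl fun j _ => hterm j k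
    rwa [heq] at h2
  · -- `g - conj φ ∈ H²`
    have hstar : MemLp (star φ) 2 μ := memℒp_star hφ
    have hc : MemLp (g - star φ) 2 μ := hg.sub hstar
    refine ⟨hc, ?_⟩
    -- the key coefficient identity
    have key : ∀ k : ℕ, fourierCoeff φ ((k : ℤ) + 1)
        = conj (fourierCoeff g (-((k : ℤ) + 1))) := by
      intro k
      set u : L2 := (fourierLp 2 (0 : ℤ) : L2) with hu
      set v : L2 := (fourierLp 2 (-((k : ℤ) + 1)) : L2) with hv
      have hum : u ∈ H2 := fourierLp_mem_H2 le_rfl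
      have hvm : v ∈ H2ᗮ := fourierLp_mem_orth (by omega)
      -- β = ⟪u, R v⟫ = φ̂(k+1)
      obtain ⟨hcφ, hEβ⟩ := inner_R_mp hR hvm hum
      have hβ : ⟪u, R v⟫ = fourierCoeff φ ((k : ℤ) + 1) := by
        rw [hEβ, inner_fourier_toLp φ hφ 0 (-((k : ℤ) + 1)) hcφ,
          show (0 : ℤ) - (-((k : ℤ) + 1)) = (k : ℤ) + 1 from by ring]
      -- γ = ⟪v, R u⟫ = ĝ(-(k+1))
      obtain ⟨hcg, hEγ⟩ := inner_R_pm hR hum hvm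
      have hγ : ⟪v, R u⟫ = fourierCoeff g (-((k : ℤ) + 1)) := by
        rw [hEγ, inner_fourier_toLp g hg (-((k : ℤ) + 1)) 0 hcg, sub_zero]
      have hQ : ∀ lam : ℂ, 0 ≤ ⟪u, R u⟫ + lam * ⟪u, R v⟫ + conj lam * ⟪v, R u⟫
          + conj lam * lam * ⟪v, R v⟫ := by
        intro lam
        have h := conj_nonneg (hpos (u + lam • v))
        rw [inner_conj_symm] at h
        rwa [inner_quadratic_expand] at h
      have h0 : 0 ≤ ⟪u, R u⟫ := by
        have := hQ 0
        simpa using this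
      have hbc := conj_of_quadratic_nonneg h0 (hQ 1) (hQ (-1)) (hQ Complex.I)
      rw [hβ, hγ] at hbc
      exact hbc
    apply mem_H2_of_coeff
    intro n hn
    have hcoe : fourierCoeff (⇑(hc.toLp (g - star φ))) n = fourierCoeff (g - star φ) n :=
      fourierCoeff_congr_ae hc.coeFn_toLp n
    rw [hcoe, fourierCoeff_sub hg hstar n]
    have hk : ∃ k : ℕ, n = -((k : ℤ) + 1) := ⟨(-n - 1).toNat, by omega⟩
    obtain ⟨k, rfl⟩ := hk
    rw [fourierCoeff_star φ (-((k : ℤ) + 1)), neg_neg, key k, Complex.conj_conj, sub_self]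

end GSIO
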